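/- Let κ ∈ ℝ, m > 0, r > 0 with κr² < 1, let θ ∈ (0, π/2) satisfy cos θ = √(1 − κr²)/(1 + √(1 − κr²)), and let α ∈ ℝ satisfy α² = m(1 − κr² + √(1 − κr²))/(r³(1 − κr²)(1 + √(1 − κr²))). Define x₂(t) = r cos(αt), y₂(t) = r sin(αt), x₃(t) = r cos(αt + θ), y₃(t) = r sin(αt + θ). Then for every t ∈ ℝ these functions satisfy the four differential equations ẍ₂ = m(κρ₁₂²/2 − 1)x₂ / (ρ₁₂³(1 − κρ₁₂²/4)^{3/2}) − κ(ẋ₂² + ẏ₂² + κB₂)x₂, ÿ₂ = m(κρ₁₂²/2 − 1)y₂ / (ρ₁₂³(1 − κρ₁₂²/4)^{3/2}) − κ(ẋ₂² + ẏ₂² + κB₂)y₂, ẍ₃ = m(κρ₁₃²/2 − 1)x₃ / (ρ₁₃³(1 − κρ₁₃²/4)^{3/2}) − κ(ẋ₃² + ẏ₃² + κB₃)x₃, ÿ₃ = m(κρ₁₃²/2 − 1)y₃ / (ρ₁₃³(1 − κρ₁₃²/4)^{3/2}) − κ(ẋ₃² + ẏ₃² + κB₃)y₃, where ρ₁₂²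 = x₂² + y₂² + κ(x₂² + y₂²)²/(1 + √(1 − κ(x₂² + y₂²)))², ρ₁₃² = x₃² + y₃² + κ(x₃² + y₃²)²/(1 + √(1 − κ(x₃² + y₃²)))², B₂ = (x₂ẋ₂ + y₂ẏ₂)²/(1 − κ(x₂² + y₂²)), and B₃ = (x₃ẋ₃ + y₃ẏ₃)²/(1 − κ(x₃² + y₃²)). -/

import Mathlib

open Real

/-- `ρ²` from the origin: the squared (chord) distance between a body at intrinsic
coordinates `(x, y)` and the body fixed at the origin, on the surface of
curvature `κ`. -/
noncomputable def rhoSqOrigin (κ x y : ℝ) : ℝ :=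
  x ^ 2 + y ^ 2 + κ * (x ^ 2 + y ^ 2) ^ 2 / (1 + Real.sqrt (1 - κ * (x ^ 2 + y ^ 2))) ^ 2

/-- The term `B = (xẋ + yẏ)²/(1 - κ(x² + y²))` from the equations of motion. -/
noncomputable def Bterm (κ x y xd yd : ℝ) : ℝ :=
  (x * xd + y * yd) ^ 2 / (1 - κ * (x ^ 2 + y ^ 2))

lemma hasDerivAt_rcos (r α φ t : ℝ) :
    HasDerivAt (fun t => r * Real.cos (α * t + φ)) (-(r * α * Real.sin (α * t + φ))) t := by
  have h : HasDerivAt (fun t : ℝ => α * t + φ) α t := by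
    simpa using ((hasDerivAt_id t).const_mul α).add_const φ
  have h2 := ((Real.hasDerivAt_cos (α * t + φ)).comp t h).const_mul r
  exact h2.congr_deriv (by ring)

lemma hasDerivAt_rsin (r α φ t : ℝ) :
    HasDerivAt (fun t => r * Real.sin (α * t + φ)) (r * α * Real.cos (α * t + φ)) t := by
  have h : HasDerivAt (fun t : ℝ => α * t + φ) α t := by
    simpa using ((hasDerivAt_id t).const_mul α).add_const φ
  have h2 := ((Real.hasDerivAt_sin (α * t + φ)).comp t h).const_mul r
  exact h2.congr_deriv (by ring)

lemma deriv_rcos (r α φ : ℝ) :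
    deriv (fun t => r * Real.cos (α * t + φ)) = fun t => -(r * α * Real.sin (α * t + φ)) :=
  funext fun t => (hasDerivAt_rcos r α φ t).deriv

lemma deriv_rsin (r α φ : ℝ) :
    deriv (fun t => r * Real.sin (α * t + φ)) = fun t => r * α * Real.cos (α * t + φ) :=
  funext fun t => (hasDerivAt_rsin r α φ t).deriv

lemma deriv2_rcos (r α φ t : ℝ) :
    deriv (deriv (fun t => r * Real.cos (α * t + φ))) t = -(r * α ^ 2 * Real.cos (α * t + φ)) := by
  rw [deriv_rcos]
  have h1 : (fun t => -(r * α * Real.sin (α * t + φ)))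
      = fun t => (-(r * α)) * Real.sin (α * t + φ) := by funext t; ring
  rw [h1, (hasDerivAt_rsin (-(r * α)) α φ t).deriv]
  ring

lemma deriv2_rsin (r α φ t : ℝ) :
    deriv (deriv (fun t => r * Real.sin (α * t + φ))) t = -(r * α ^ 2 * Real.sin (α * t + φ)) := by
  rw [deriv_rsin]
  have h1 : (fun t => r * α * Real.cos (α * t + φ))
      = fun t => (r * α) * Real.cos (α * t + φ) := by funext t; ring
  rw [h1, (hasDerivAt_rcos (r * α) α φ t).deriv]
  ring

lemma key (κ m r α : ℝ) (hr : 0 < r) (hκr : κ * r ^ 2 < 1)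
    (hα' : α ^ 2 * (r ^ 3 * Real.sqrt (1 - κ * r ^ 2)) = m)
    (c d e : ℝ) (hcd : c ^ 2 + d ^ 2 = 1) :
    -(r * α ^ 2 * e)
      = m * (κ * rhoSqOrigin κ (r * c) (r * d) / 2 - 1) * (r * e)
          / (Real.sqrt (rhoSqOrigin κ (r * c) (r * d)) ^ 3
            * (1 - κ * rhoSqOrigin κ (r * c) (r * d) / 4) ^ ((3 : ℝ) / 2))
        - κ * ((-(r * α * d)) ^ 2 + (r * α * c) ^ 2
            + κ * Bterm κ (r * c) (r * d) (-(r * α * d)) (r * α * c)) * (r * e) := by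
  set s := Real.sqrt (1 - κ * r ^ 2) with hs_def
  have h1κ : (0:ℝ) < 1 - κ * r ^ 2 := by linarith
  have hs : 0 < s := Real.sqrt_pos.mpr h1κ
  have hs2 : s ^ 2 = 1 - κ * r ^ 2 := Real.sq_sqrt h1κ.le
  have h1s : (0:ℝ) < 1 + s := by linarith
  have hxy : (r * c) ^ 2 + (r * d) ^ 2 = r ^ 2 := by
    have h : (r * c) ^ 2 + (r * d) ^ 2 = r ^ 2 * (c ^ 2 + d ^ 2) := by ring
    rw [h, hcd, mul_one]
  have hR : rhoSqOrigin κ (r * c) (r * d) = 2 * r ^ 2 / (1 + s) := by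
    rw [rhoSqOrigin, hxy, ← hs_def]
    field_simp
    linear_combination hs2
  have hB : Bterm κ (r * c) (r * d) (-(r * α * d)) (r * α * c) = 0 := by
    rw [Bterm]
    have h : r * c * -(r * α * d) + r * d * (r * α * c) = 0 := by ring
    rw [h]
    simp
  have hRpos : (0:ℝ) < 2 * r ^ 2 / (1 + s) := by positivity
  have hbr : 1 - κ * (2 * r ^ 2 / (1 + s)) / 4 = (1 + s) / 2 := by
    field_simp
    nlinarith [hs2]
  have hden : Real.sqrt (2 * r ^ 2 / (1 + s)) ^ 3
      * ((1 + s) / 2) ^ ((3 : ℝ) / 2) = r ^ 3 := by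
    have hb : (0:ℝ) < (1 + s) / 2 := by linarith
    have e1 : Real.sqrt (2 * r ^ 2 / (1 + s)) ^ 3
        = (2 * r ^ 2 / (1 + s)) * Real.sqrt (2 * r ^ 2 / (1 + s)) := by
      rw [pow_succ, Real.sq_sqrt hRpos.le]
    have e2 : ((1 + s) / 2) ^ ((3 : ℝ) / 2)
        = ((1 + s) / 2) * Real.sqrt ((1 + s) / 2) := by
      rw [show (3:ℝ)/2 = 1 + 1/2 by norm_num, Real.rpow_add hb, Real.rpow_one,
        ← Real.sqrt_eq_rpow]
    rw [e1, e2]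
    have h3 : (2 * r ^ 2 / (1 + s)) * Real.sqrt (2 * r ^ 2 / (1 + s))
        * ((1 + s) / 2 * Real.sqrt ((1 + s) / 2))
        = (2 * r ^ 2 / (1 + s) * ((1 + s) / 2))
          * (Real.sqrt (2 * r ^ 2 / (1 + s)) * Real.sqrt ((1 + s) / 2)) := by ring
    rw [h3, ← Real.sqrt_mul hRpos.le]
    have h4 : 2 * r ^ 2 / (1 + s) * ((1 + s) / 2) = r ^ 2 := by field_simp
    rw [h4, Real.sqrt_sq hr.le]
    ring
  rw [hR, hB, hbr, hden]
  have hκ : κ = (1 - s ^ 2) / r ^ 2 := by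
    rw [hs2]; field_simp; ring
  rw [← hα', hκ]
  field_simp
  linear_combination (r ^ 4 * α ^ 2 * e * (1 + s - s ^ 2 - s ^ 3)) * hcd

/-- Theorem 5 of the paper: in the planetary case (`m₁ = m` at the origin,
`m₂ = m₃ = 0`), the uniformly rotating equilateral configuration solves the
equations of motion (36) for every curvature `κ`. -/
theorem planetary_lagrangian_solution (κ m r θ α : ℝ)
    (hm : 0 < m) (hr : 0 < r) (hκr : κ * r ^ 2 < 1)
    (hθ₁ : 0 < θ) (hθ₂ : θ < Real.pi / 2)
    (hθ : Real.cos θ = Real.sqrt (1 - κ * r ^ 2) / (1 + Real.sqrt (1 - κ * r ^ 2)))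
    (hα : α ^ 2 = m * (1 - κ * r ^ 2 + Real.sqrt (1 - κ * r ^ 2))
        / (r ^ 3 * (1 - κ * r ^ 2) * (1 + Real.sqrt (1 - κ * r ^ 2))))
    (x₂ y₂ x₃ y₃ : ℝ → ℝ)
    (hx₂ : x₂ = fun t => r * Real.cos (α * t))
    (hy₂ : y₂ = fun t => r * Real.sin (α * t))
    (hx₃ : x₃ = fun t => r * Real.cos (α * t + θ))
    (hy₃ : y₃ = fun t => r * Real.sin (α * t + θ)) :
    ∀ t : ℝ,
      deriv (deriv x₂) t
          = m * (κ * rhoSqOrigin κ (x₂ t) (y₂ t) / 2 - 1) * x₂ t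
              / (Real.sqrt (rhoSqOrigin κ (x₂ t) (y₂ t)) ^ 3
                * (1 - κ * rhoSqOrigin κ (x₂ t) (y₂ t) / 4) ^ ((3 : ℝ) / 2))
            - κ * ((deriv x₂ t) ^ 2 + (deriv y₂ t) ^ 2
                + κ * Bterm κ (x₂ t) (y₂ t) (deriv x₂ t) (deriv y₂ t)) * x₂ t ∧
      deriv (deriv y₂) t
          = m * (κ * rhoSqOrigin κ (x₂ t) (y₂ t) / 2 - 1) * y₂ t
              / (Real.sqrt (rhoSqOrigin κ (x₂ t) (y₂ t)) ^ 3
                * (1 - κ * rhoSqOrigin κ (x₂ t) (y₂ t) / 4) ^ ((3 : ℝ) / 2))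
            - κ * ((deriv x₂ t) ^ 2 + (deriv y₂ t) ^ 2
                + κ * Bterm κ (x₂ t) (y₂ t) (deriv x₂ t) (deriv y₂ t)) * y₂ t ∧
      deriv (deriv x₃) t
          = m * (κ * rhoSqOrigin κ (x₃ t) (y₃ t) / 2 - 1) * x₃ t
              / (Real.sqrt (rhoSqOrigin κ (x₃ t) (y₃ t)) ^ 3
                * (1 - κ * rhoSqOrigin κ (x₃ t) (y₃ t) / 4) ^ ((3 : ℝ) / 2))
            - κ * ((deriv x₃ t) ^ 2 + (deriv y₃ t) ^ 2
                + κ * Bterm κ (x₃ t) (y₃ t) (deriv x₃ t) (deriv y₃ t)) * x₃ t ∧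
      deriv (deriv y₃) t
          = m * (κ * rhoSqOrigin κ (x₃ t) (y₃ t) / 2 - 1) * y₃ t
              / (Real.sqrt (rhoSqOrigin κ (x₃ t) (y₃ t)) ^ 3
                * (1 - κ * rhoSqOrigin κ (x₃ t) (y₃ t) / 4) ^ ((3 : ℝ) / 2))
            - κ * ((deriv x₃ t) ^ 2 + (deriv y₃ t) ^ 2
                + κ * Bterm κ (x₃ t) (y₃ t) (deriv x₃ t) (deriv y₃ t)) * y₃ t := by
  
  subst hx₂ hy₂ hx₃ hy₃
  have hφα : α ^ 2 * (r ^ 3 * Real.sqrt (1 - κ * r ^ 2)) = m := by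
    set s := Real.sqrt (1 - κ * r ^ 2) with hs_def
    have h1κ : (0:ℝ) < 1 - κ * r ^ 2 := by linarith
    have hs : 0 < s := Real.sqrt_pos.mpr h1κ
    have hs2 : s ^ 2 = 1 - κ * r ^ 2 := Real.sq_sqrt h1κ.le
    have h1s : (0:ℝ) < 1 + s := by linarith
    rw [← hs2] at hα
    rw [hα]
    field_simp
    ring
  intro t
  have e2c : (fun t => r * Real.cos (α * t)) = fun t => r * Real.cos (α * t + 0) := by
    funext u; rw [add_zero]
  have e2s : (fun t => r * Real.sin (α * t)) = fun t => r * Real.sin (α * t + 0) := by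
    funext u; rw [add_zero]
  rw [e2c, e2s]
  refine ⟨?_, ?_, ?_, ?_⟩
  · rw [deriv2_rcos r α 0 t]
    simp only [deriv_rcos, deriv_rsin]
    exact key κ m r α hr hκr hφα _ _ _ (Real.cos_sq_add_sin_sq _)
  · rw [deriv2_rsin r α 0 t]
    simp only [deriv_rcos, deriv_rsin]
    exact key κ m r α hr hκr hφα _ _ _ (Real.cos_sq_add_sin_sq _)
  · rw [deriv2_rcos r α θ t]
    simp only [deriv_rcos, deriv_rsin]
    exact key κ m r α hr hκr hφα _ _ _ (Real.cos_sq_add_sin_sq _)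
  · rw [deriv2_rsin r α θ t]
    simp only [deriv_rcos, deriv_rsin]
    exact key κ m r α hr hκr hφα _ _ _ (Real.cos_sq_add_sin_sq _)
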